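/- Let I ⊂ S be a monomial ideal such that I_{≥ e} is stable for some integer e ≥ deg(I), where deg(I) is the maximal degree of a minimal monomial generator of I. Then I is an ideal of Borel type. -/

import Mathlib

/-! Monomials in `S = K[x_1,…,x_n]` are identified with their exponent vectors in
`Fin n →₀ ℕ` (0-indexed: the variable `x_j` of the paper is index `j-1`).
A monomial ideal is identified with its set `M` of exponent vectors of monomials. -/

/-- `M` is the set of exponent vectors of the monomials of a monomial ideal:
it is closed under multiplication by arbitrary monomials. -/
def MonIdeal {n : ℕ} (M : Set (Fin n →₀ ℕ)) : Prop :=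
  ∀ u ∈ M, ∀ v : Fin n →₀ ℕ, u + v ∈ M

/-- The Borel type condition: for every monomial `u ∈ I` and `j < i` with `x_i ∣ u`
there is `t > 0` with `x_j^t · u / x_i^{ν_i(u)} ∈ I`. -/
def BorelProp {n : ℕ} (M : Set (Fin n →₀ ℕ)) : Prop :=
  ∀ u ∈ M, ∀ i j : Fin n, j < i → u i ≠ 0 →
    ∃ t : ℕ, 0 < t ∧ Finsupp.single j t + Finsupp.update u i 0 ∈ M

/-- `i = m(u)`, the largest index of a variable dividing the monomial `u`. -/
def IsMaxVar {n : ℕ} (u : Fin n →₀ ℕ) (i : Fin n) : Prop :=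
  u i ≠ 0 ∧ ∀ k : Fin n, i < k → u k = 0

/-- `M` is stable: for every monomial `u ∈ M` and `j < m(u)`, `x_j · u / x_{m(u)} ∈ M`. -/
def StableProp {n : ℕ} (M : Set (Fin n →₀ ℕ)) : Prop :=
  ∀ u ∈ M, ∀ i : Fin n, IsMaxVar u i → ∀ j : Fin n, j < i →
    Finsupp.single j 1 + Finsupp.update u i (u i - 1) ∈ M

/-- degree of a monomial. -/
def mdeg {n : ℕ} (u : Fin n →₀ ℕ) : ℕ := ∑ k : Fin n, u k

/-- `u` is a minimal monomial generator of `M` (divisibility of monomials is `≤`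
of exponent vectors). -/
def MinGen {n : ℕ} (M : Set (Fin n →₀ ℕ)) (u : Fin n →₀ ℕ) : Prop :=
  u ∈ M ∧ ∀ v ∈ M, v ≤ u → v = u

/-- `deg(I)`: the maximal degree of a minimal monomial generator. -/
noncomputable def idealDeg {n : ℕ} (M : Set (Fin n →₀ ℕ)) : ℕ :=
  sSup {d | ∃ u, MinGen M u ∧ mdeg u = d}

/-- `I_{≥ e}`: the ideal generated by all monomials of `I` of degree `≥ e`. -/
def geSet {n : ℕ} (M : Set (Fin n →₀ ℕ)) (e : ℕ) : Set (Fin n →₀ ℕ) :=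
  {w | ∃ u ∈ M, e ≤ mdeg u ∧ u ≤ w}

/-- the product of two monomial ideals (on the level of monomials). -/
def prodSet {n : ℕ} (M N : Set (Fin n →₀ ℕ)) : Set (Fin n →₀ ℕ) :=
  {w | ∃ u ∈ M, ∃ v ∈ N, w = u + v}

/-- The Castelnuovo–Mumford regularity of a monomial ideal of Borel type: by
[Cimpoeas, Cor. 8] / Theorem 1.5, `reg(I) = min { e ≥ deg I : I_{≥e} is stable }`. -/
noncomputable def regSet {n : ℕ} (M : Set (Fin n →₀ ℕ)) : ℕ :=
  sInf {e | idealDeg M ≤ e ∧ StableProp (geSet M e)}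

/-- `q` (0-indexed) is the largest index with `x_q ∈ √I`. -/
def IsQ {n : ℕ} (M : Set (Fin n →₀ ℕ)) (q : Fin n) : Prop :=
  (∃ k : ℕ, 0 < k ∧ Finsupp.single q k ∈ M) ∧
    ∀ j : Fin n, (∃ k : ℕ, 0 < k ∧ Finsupp.single j k ∈ M) → j ≤ q

/-- if `I_{≥e}` is stable for some `e ≥ deg I`, then `I` is of Borel type. -/
lemma collapse_mem {n : ℕ} (M' : Set (Fin n →₀ ℕ)) (hst : StableProp M') (j : Fin n) :
    ∀ s : ℕ, ∀ u ∈ M', (∑ k ∈ Finset.univ.filter (fun k => j < k), u k) = s →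
      Finsupp.single j s + Finsupp.filter (fun k => k ≤ j) u ∈ M' := by
  intro s
  induction s with
  | zero =>
    intro u hu hsum
    have hz : ∀ k : Fin n, j < k → u k = 0 := by
      intro k hk
      have := Finset.sum_eq_zero_iff.mp hsum k (by simp [hk])
      exact this
    have : Finsupp.filter (fun k => k ≤ j) u = u := by
      ext k
      rcases le_or_gt k j with h | h
      · simp [Finsupp.filter_apply, h]
      · simp [Finsupp.filter_apply, not_le.mpr h, hz k h]
    simpa [this] using hu
  | succ s ih =>
    intro u hu hsum
    have hne : u.support.Nonempty := by
      rcases Finset.exists_ne_zero_of_sum_ne_zero (by simp [hsum] : (∑ k ∈ Finset.univ.filter (fun k => j < k), u k) ≠ 0) with ⟨k, _, hk⟩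
      exact ⟨k, Finsupp.mem_support_iff.mpr hk⟩
    set m := u.support.max' hne with hm
    have hum : u m ≠ 0 := Finsupp.mem_support_iff.mp (u.support.max'_mem hne)
    have hmax : ∀ k : Fin n, m < k → u k = 0 := by
      intro k hk
      by_contra h
      exact absurd (u.support.le_max' k (Finsupp.mem_support_iff.mpr h)) (not_le.mpr hk)
    have hjm : j < m := by
      rcases Finset.exists_ne_zero_of_sum_ne_zero (by simp [hsum] : (∑ k ∈ Finset.univ.filter (fun k => j < k), u k) ≠ 0) with ⟨k, hkmem, hk⟩
      have hjk : j < k := by simpa using hkmem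
      exact lt_of_lt_of_le hjk (u.support.le_max' k (Finsupp.mem_support_iff.mpr hk))
    have hv : Finsupp.single j 1 + Finsupp.update u m (u m - 1) ∈ M' :=
      hst u hu m ⟨hum, hmax⟩ j hjm
    set v := Finsupp.single j 1 + Finsupp.update u m (u m - 1) with hvdef
    have hvk : ∀ k : Fin n, v k = (if k = j then 1 else 0) + (if k = m then u m - 1 else u k) := by
      intro k
      rw [hvdef, Finsupp.add_apply, Finsupp.single_apply, Finsupp.coe_update,
        Function.update_apply]
      congr 1
      by_cases h1 : k = j
      · simp [h1]
      · rw [if_neg (fun hh : j = k => h1 hh.symm), if_neg h1]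
    have hvsum : (∑ k ∈ Finset.univ.filter (fun k => j < k), v k) = s := by
      have hmmem : m ∈ Finset.univ.filter (fun k => j < k) := by simp [hjm]
      have h1 : (∑ k ∈ Finset.univ.filter (fun k => j < k), v k)
          = (u m - 1) + ∑ k ∈ (Finset.univ.filter (fun k => j < k)).erase m, u k := by
        rw [← Finset.add_sum_erase _ v hmmem]
        congr 1
        · rw [hvk m]; simp [Fin.ne_of_gt hjm]
        · apply Finset.sum_congr rfl
          intro k hk
          have hkm : k ≠ m := (Finset.mem_erase.mp hk).1
          have hjk : j < k := by have := (Finset.mem_erase.mp hk).2; simpa using this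
          rw [hvk k]; simp [hkm, Fin.ne_of_gt hjk]
      have h2 : u m + ∑ k ∈ (Finset.univ.filter (fun k => j < k)).erase m, u k = s + 1 := by
        rw [Finset.add_sum_erase _ u hmmem]; exact hsum
      omega
    have key := ih v hv hvsum
    have heq : Finsupp.single j (s + 1) + Finsupp.filter (fun k => k ≤ j) u
        = Finsupp.single j s + Finsupp.filter (fun k => k ≤ j) v := by
      ext k
      rcases le_or_gt k j with h | h
      · have hkm : k ≠ m := by intro hkm; rw [hkm] at h; exact absurd h (not_le.mpr hjm)
        rw [Finsupp.add_apply, Finsupp.add_apply, Finsupp.single_apply, Finsupp.single_apply,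
          Finsupp.filter_apply, Finsupp.filter_apply, if_pos h, if_pos h, hvk k, if_neg hkm]
        by_cases hkj : k = j
        · subst hkj; split_ifs <;> omega
        · have hjk : ¬ j = k := fun hh => hkj hh.symm
          rw [if_neg hjk, if_neg hjk, if_neg hkj]
          simp
      · have h1 : ¬ k ≤ j := not_le.mpr h
        have h2 : j ≠ k := Fin.ne_of_lt h
        simp [Finsupp.add_apply, Finsupp.single_apply, Finsupp.filter_apply, h1, h2]
    rw [heq]; exact key

theorem statement8 {n : ℕ} (M : Set (Fin n →₀ ℕ)) (hM : MonIdeal M)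
    (e : ℕ) (he : idealDeg M ≤ e) (hst : StableProp (geSet M e)) :
    BorelProp M := by
  intro u hu i j hji hui
  have hsub : geSet M e ⊆ M := by
    rintro w ⟨v, hv, -, hvw⟩
    obtain ⟨c, rfl⟩ := le_iff_exists_add.mp hvw
    exact hM v hv c
  set u' := u + Finsupp.single i e with hu'def
  have hu'M : u' ∈ M := hM u hu _
  have hmdeg : mdeg u' = mdeg u + e := by
    simp [mdeg, hu'def, Finset.sum_add_distrib, Finsupp.add_apply, Finsupp.single_apply]
  have hge : u' ∈ geSet M e := ⟨u', hu'M, by omega, le_refl _⟩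
  set s := ∑ k ∈ Finset.univ.filter (fun k => j < k), u' k with hs
  have hz := collapse_mem (geSet M e) hst j s u' hge rfl
  have hzM : Finsupp.single j s + Finsupp.filter (fun k => k ≤ j) u' ∈ M := hsub hz
  have hspos : 0 < s := by
    have h1 : u' i ≤ s := Finset.single_le_sum (fun k _ => Nat.zero_le _) (by simp [hji])
    have h2 : u' i ≠ 0 := by simp [hu'def, Finsupp.add_apply, Finsupp.single_apply, hui]
    omega
  refine ⟨s, hspos, ?_⟩
  have hle : Finsupp.single j s + Finsupp.filter (fun k => k ≤ j) u'
      ≤ Finsupp.single j s + Finsupp.update u i 0 := by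
    rw [Finsupp.le_def]
    intro k
    rw [Finsupp.add_apply, Finsupp.add_apply]
    apply Nat.add_le_add_left
    rcases le_or_gt k j with h | h
    · have hki : k ≠ i := Fin.ne_of_lt (lt_of_le_of_lt h hji)
      rw [Finsupp.filter_apply, if_pos h, Finsupp.coe_update, Function.update_apply,
        if_neg hki, hu'def, Finsupp.add_apply, Finsupp.single_apply,
        if_neg (fun hh : i = k => hki hh.symm), Nat.add_zero]
    · rw [Finsupp.filter_apply, if_neg (not_le.mpr h)]
      exact Nat.zero_le _
  obtain ⟨c, hc⟩ := le_iff_exists_add.mp hle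
  rw [hc]
  exact hM _ hzM c
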